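/- For every real u ≥ 0, the function h(u) := (1+u)·log(1+u) − u satisfies h(u) ≥ (u·log u)/2, where log is the natural logarithm and we interpret u·log u as 0 at u = 0. -/

import Mathlib

lemma aux_log_ge (x : ℝ) (hx : 0 < x) : 1 - 1/x ≤ Real.log x := by
  have h := Real.log_le_sub_one_of_pos (show (0:ℝ) < x⁻¹ from inv_pos.mpr hx)
  rw [Real.log_inv, one_div] at *
  linarith

/-- For every real `u ≥ 0`, `h(u) = (1+u) log(1+u) - u` satisfies `h(u) ≥ u log u / 2`.
(In Lean, `Real.log 0 = 0`, so `u * log u` is interpreted as `0` at `u = 0`.) -/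
theorem stmt_2 (u : ℝ) (hu : 0 ≤ u) :
    (1 + u) * Real.log (1 + u) - u ≥ u * Real.log u / 2 := by
  rcases le_or_gt u 1 with h1 | h1
  · -- 0 ≤ u ≤ 1 : RHS ≤ 0 ≤ LHS
    have hpos : (0:ℝ) < 1 + u := by linarith
    have h := aux_log_ge (1+u) hpos
    have hmul : (1+u) * (1 - 1/(1+u)) ≤ (1+u) * Real.log (1+u) :=
      mul_le_mul_of_nonneg_left h (by linarith)
    have hexp : (1+u) * (1 - 1/(1+u)) = u := by field_simp; ring
    have hlhs : 0 ≤ (1+u) * Real.log (1+u) - u := by linarith [hexp ▸ hmul]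
    have hrhs : u * Real.log u / 2 ≤ 0 := by
      rcases eq_or_lt_of_le hu with h0 | h0
      · simp [← h0]
      · have := Real.log_nonpos (le_of_lt h0) h1
        nlinarith
    linarith
  · have hu0 : 0 < u := lt_trans one_pos h1
    have hkey : (1+u) * Real.log u + 1 ≤ (1+u) * Real.log (1+u) := by
      have h := aux_log_ge ((1+u)/u) (by positivity)
      rw [Real.log_div (by linarith) (ne_of_gt hu0)] at h
      have heq : 1 - 1/((1+u)/u) = 1/(1+u) := by field_simp; ring
      have h2 : 1/(1+u) ≤ Real.log (1+u) - Real.log u := by linarith [heq ▸ h]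
      have hmul := mul_le_mul_of_nonneg_left h2 (show (0:ℝ) ≤ 1 + u by linarith)
      have hexp : (1+u) * (1/(1+u)) = 1 := by field_simp
      nlinarith
    suffices hs : u - 1 ≤ (1 + u/2) * Real.log u by nlinarith
    rcases le_or_gt u 4 with h4 | h4
    · -- 1 < u ≤ 4
      set s := Real.sqrt u with hsdef
      have hs0 : 0 < s := Real.sqrt_pos.mpr hu0
      have hs2 : s^2 = u := Real.sq_sqrt hu
      have hs1 : 1 ≤ s := by nlinarith
      have hs4 : s ≤ 2 := by nlinarith
      have hlog : Real.log u = 2 * Real.log s := by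
        rw [← hs2, Real.log_pow]; push_cast; ring
      have hls : 1 - 1/s ≤ Real.log s := aux_log_ge s hs0
      have hq : (2+u)*(1-1/s) - (u-1) = (s-1)*(2-s)/s := by
        rw [← hs2]; field_simp; ring
      have hnn : 0 ≤ (s-1)*(2-s)/s :=
        div_nonneg (mul_nonneg (by linarith) (by linarith)) hs0.le
      nlinarith [mul_le_mul_of_nonneg_left hls (show (0:ℝ) ≤ 2 + u by linarith),
        hq, hnn]
    · -- u > 4
      have h := aux_log_ge (u/4) (by linarith)
      rw [Real.log_div (ne_of_gt hu0) (by norm_num)] at h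
      have h4' : Real.log 4 = 2 * Real.log 2 := by
        rw [show (4:ℝ) = 2^2 by norm_num, Real.log_pow]; push_cast; ring
      have heq : 1 - 1/(u/4) = 1 - 4/u := by field_simp
      have hL : 2 * Real.log 2 + 1 - 4/u ≤ Real.log u := by linarith [heq ▸ h]
      have hl2 : (0.6931471803:ℝ) < Real.log 2 := Real.log_two_gt_d9
      have hfrac : 4/u * u = 4 := by field_simp
      have hfle : 4/u ≤ 1 := by
        rw [div_le_one hu0]; linarith
      have hf0 : 0 < 4/u := by positivity
      nlinarith [mul_le_mul_of_nonneg_left hL (show (0:ℝ) ≤ 1 + u/2 by linarith),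
        mul_le_mul_of_nonneg_left hfle (show (0:ℝ) ≤ u/2 by linarith)]
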